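/- Let X be an n×p real matrix with p > n whose columns X_1,…,X_p are in general linear position. If 0 lies in the convex hull of {X_1,…,X_p}, then the convex cone generated by the columns satisfies cone{X_1,…,X_p} = ℝⁿ; consequently, for every y ∈ ℝⁿ the minimum of (1/n)‖y − Xβ‖₂² over β ⪰ 0 equals 0. -/

import Mathlib

open Matrix Finset

noncomputable section

/-- Squared Euclidean norm of a vector. -/
def sqNorm {n : ℕ} (v : Fin n → ℝ) : ℝ := ∑ i, (v i) ^ 2

/-- The columns of `X` are in general linear position: every collection of `min n p`
of them is linearly independent. -/
def GLP {n p : ℕ} (X : Matrix (Fin n) (Fin p) ℝ) : Prop :=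
  ∀ J : Finset (Fin p), J.card = min n p →
    LinearIndependent ℝ (fun j : {x // x ∈ J} => fun i => X i j.1)

/-- if `p > n`, the columns of `X` are in general linear position and
`0` lies in the convex hull of the columns, then the cone generated by the columns is
all of ℝⁿ, and consequently for every `y` the minimum of `(1/n)‖y − Xβ‖₂²` over
`β ⪰ 0` equals `0`. -/
theorem stmt_0 (n p : ℕ) (hnp : n < p) (X : Matrix (Fin n) (Fin p) ℝ)
    (hglp : GLP X)
    (h0 : (0 : Fin n → ℝ) ∈ convexHull ℝ (Set.range fun j => fun i => X i j)) :
    {v : Fin n → ℝ | ∃ β : Fin p → ℝ, (∀ j, 0 ≤ β j) ∧ v = X.mulVec β} = Set.univ ∧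
    ∀ y : Fin n → ℝ,
      IsLeast ((fun β : Fin p → ℝ => (1 / (n : ℝ)) * sqNorm (y - X.mulVec β)) ''
        {β | ∀ j, 0 ≤ β j}) 0 := by
  classical
  set col : Fin p → (Fin n → ℝ) := fun j i => X i j with hcoldef
  have hmv : ∀ β : Fin p → ℝ, X.mulVec β = ∑ j, β j • col j := by
    intro β
    funext i
    simp [Matrix.mulVec, dotProduct, Finset.sum_apply, mul_comm, hcoldef]
  -- extract convex weights
  rw [convexHull_range_eq_exists_affineCombination] at h0
  obtain ⟨s, w0, hw0, hsum0, haff⟩ := h0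
  set w : Fin p → ℝ := fun j => if j ∈ s then w0 j else 0 with hwdef
  have hwnn : ∀ j, 0 ≤ w j := by
    intro j
    simp only [hwdef]
    split
    · exact hw0 _ ‹_›
    · exact le_refl 0
  have hwsum : ∑ j, w j = 1 := by
    simp only [hwdef]
    rw [Finset.sum_ite_mem, Finset.univ_inter]
    exact hsum0
  have hker : ∑ j, w j • col j = 0 := by
    have h1 : s.affineCombination ℝ col w0 = ∑ j ∈ s, w0 j • col j :=
      s.affineCombination_eq_linear_combination col w0 hsum0
    have h2 : ∑ j, w j • col j = ∑ j ∈ s, w0 j • col j := by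
      simp only [hwdef, ite_smul, zero_smul]
      rw [Finset.sum_ite_mem, Finset.univ_inter]
    rw [h2, ← h1, haff]
  -- the support of w
  set S : Finset (Fin p) := Finset.univ.filter (fun j => 0 < w j) with hSdef
  have hw_eq_zero : ∀ j ∉ S, w j = 0 := by
    intro j hj
    simp only [hSdef, Finset.mem_filter, Finset.mem_univ, true_and, not_lt] at hj
    exact le_antisymm hj (hwnn j)
  have hScard : n < S.card := by
    by_contra hle
    push_neg at hle
    obtain ⟨J, hSJ, -, hJcard⟩ :=
      Finset.exists_subsuperset_card_eq (Finset.subset_univ S) hle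
        (by simpa using hnp.le)
    have hli := hglp J (by rw [hJcard, min_eq_left hnp.le])
    have hz : ∑ j : {x // x ∈ J}, w j.1 • col j.1 = 0 := by
      have e1 : ∑ j : {x // x ∈ J}, w j.1 • col j.1 = ∑ j ∈ J, w j • col j :=
        Finset.sum_attach J (fun j => w j • col j)
      have e2 : ∑ j ∈ J, w j • col j = ∑ j, w j • col j := by
        refine Finset.sum_subset (Finset.subset_univ J) ?_
        intro j _ hj
        rw [hw_eq_zero j (fun hjS => hj (hSJ hjS)), zero_smul]
      rw [e1, e2, hker]
    have hall := Fintype.linearIndependent_iff.1 hli (fun j => w j.1) hz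
    have hwzero : ∀ j, w j = 0 := by
      intro j
      by_cases hj : j ∈ J
      · exact hall ⟨j, hj⟩
      · exact hw_eq_zero j (fun hjS => hj (hSJ hjS))
    simp [hwzero] at hwsum
  -- pick a subset of the support of size n
  obtain ⟨S₀, hS₀S, hS₀card⟩ := Finset.exists_subset_card_eq (s := S) (n := n) hScard.le
  have hwpos : ∀ j ∈ S₀, 0 < w j := by
    intro j hj
    have := hS₀S hj
    simp only [hSdef, Finset.mem_filter] at this
    exact this.2
  have hli₀ := hglp S₀ (by rw [hS₀card, min_eq_left hnp.le])
  have hspan : Submodule.span ℝ (Set.range fun j : {x // x ∈ S₀} => col j.1) = ⊤ := by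
    refine hli₀.span_eq_top_of_card_eq_finrank' ?_
    rw [Fintype.card_coe, hS₀card, Module.finrank_fintype_fun_eq_card, Fintype.card_fin]
  -- the cone is everything
  have cone : ∀ v : Fin n → ℝ, ∃ β : Fin p → ℝ, (∀ j, 0 ≤ β j) ∧ v = X.mulVec β := by
    intro v
    have hv : v ∈ Submodule.span ℝ (Set.range fun j : {x // x ∈ S₀} => col j.1) := by
      rw [hspan]; trivial
    rw [Submodule.mem_span_range_iff_exists_fun] at hv
    obtain ⟨c, hc⟩ := hv
    set c' : Fin p → ℝ := fun j => if h : j ∈ S₀ then c ⟨j, h⟩ else 0 with hc'def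
    have hc'sum : ∑ j, c' j • col j = v := by
      have e0 : ∑ j, c' j • col j = ∑ j ∈ S₀, c' j • col j := by
        refine (Finset.sum_subset (Finset.subset_univ S₀) ?_).symm
        intro j _ hj
        simp [hc'def, hj]
      have e1 : ∑ j ∈ S₀, c' j • col j = ∑ j : {x // x ∈ S₀}, c' j.1 • col j.1 :=
        (Finset.sum_coe_sort (s := S₀) (f := fun j => c' j • col j)).symm
      have e2 : ∀ j : {x // x ∈ S₀}, c' j.1 = c j := by
        intro j
        simp [hc'def, j.2]
      rw [e0, e1]
      simp only [e2]
      exact hc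
    set t : ℝ := ∑ j : {x // x ∈ S₀}, |c j| / w j.1 with htdef
    have htnn : 0 ≤ t := by
      apply Finset.sum_nonneg
      intro j _
      exact div_nonneg (abs_nonneg _) (hwnn _)
    have htge : ∀ j : {x // x ∈ S₀}, |c j| / w j.1 ≤ t := by
      intro j
      rw [htdef]
      exact Finset.single_le_sum (f := fun i : {x // x ∈ S₀} => |c i| / w i.1)
        (fun i _ => div_nonneg (abs_nonneg _) (hwnn _)) (Finset.mem_univ j)
    refine ⟨fun j => c' j + t * w j, ?_, ?_⟩
    · intro j
      show 0 ≤ c' j + t * w j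
      by_cases hj : j ∈ S₀
      · have hwj := hwpos j hj
        have h1 : |c ⟨j, hj⟩| ≤ t * w j := by
          have := htge ⟨j, hj⟩
          calc |c ⟨j, hj⟩| = (|c ⟨j, hj⟩| / w j) * w j := by
                field_simp
            _ ≤ t * w j := mul_le_mul_of_nonneg_right this hwj.le
        have h2 : c' j = c ⟨j, hj⟩ := by simp [hc'def, hj]
        rw [h2]
        nlinarith [neg_abs_le (c ⟨j, hj⟩)]
      · have h2 : c' j = 0 := by simp [hc'def, hj]
        rw [h2, zero_add]
        exact mul_nonneg htnn (hwnn j)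
    · rw [hmv]
      have : ∑ j, (c' j + t * w j) • col j
          = (∑ j, c' j • col j) + t • (∑ j, w j • col j) := by
        rw [Finset.smul_sum, ← Finset.sum_add_distrib]
        refine Finset.sum_congr rfl (fun j _ => ?_)
        rw [add_smul, smul_smul]
      rw [this, hc'sum, hker, smul_zero, add_zero]
  constructor
  · ext v
    simpa using cone v
  · intro y
    constructor
    · obtain ⟨β, hβnn, hβ⟩ := cone y
      refine ⟨β, hβnn, ?_⟩
      show (1 / (n : ℝ)) * sqNorm (y - X.mulVec β) = 0
      rw [← hβ]
      simp [sqNorm]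
    · rintro z ⟨β, -, rfl⟩
      have h1 : 0 ≤ sqNorm (y - X.mulVec β) :=
        Finset.sum_nonneg fun i _ => sq_nonneg _
      have h2 : 0 ≤ (1 / (n : ℝ)) := by positivity
      exact mul_nonneg h2 h1
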